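/- Let (a,b) ∈ {(3,0), (1,2)} ⊆ (ℤ/4ℤ)², i.e., θ = a + bw ∈ {3, 1+2w}, and R = R_θ, and let n ≥ 1. If C ⊆ Rⁿ is a self-dual linear code (C = C^⊥), then the all-(2+2w) vector (2+2w, 2+2w, …, 2+2w) belongs to C. -/

import Mathlib

open Polynomial

/-- The base ring ℤ/4ℤ. -/
abbrev Z4 := ZMod 4

/-- The polynomial X² − (a + bX) over ℤ/4ℤ. -/
noncomputable def wPoly (a b : Z4) : Z4[X] := X ^ 2 - (C b * X + C a)

/-- The ring R_{a+bw} = (ℤ/4ℤ)[X]/(X² − (a + bX)); every element is uniquely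
x₀ + x₁·w with x₀, x₁ ∈ ℤ/4ℤ, and w² = a + b·w. -/
abbrev Rw (a b : Z4) : Type := AdjoinRoot (wPoly a b)

/-- The element w of R_{a+bw}. -/
noncomputable def ww (a b : Z4) : Rw a b := AdjoinRoot.root _

lemma wPoly_monic (a b : Z4) : (wPoly a b).Monic := by
  unfold wPoly
  apply Polynomial.monic_X_pow_sub
  exact Polynomial.degree_linear_le.trans_lt (by exact_mod_cast Nat.one_lt_two)

lemma wPoly_degree (a b : Z4) : (wPoly a b).degree = 2 := by
  unfold wPoly
  compute_degree!

lemma hw_rel (a b : Z4) :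
    (AdjoinRoot.root (wPoly a b)) ^ 2 =
      AdjoinRoot.of (wPoly a b) b * AdjoinRoot.root (wPoly a b) + AdjoinRoot.of (wPoly a b) a := by
  have h := AdjoinRoot.mk_self (f := wPoly a b)
  conv_lhs at h => unfold wPoly
  rw [map_sub, map_pow, map_add, map_mul, AdjoinRoot.mk_X, AdjoinRoot.mk_C, AdjoinRoot.mk_C] at h
  exact sub_eq_zero.mp h

/-- Key ring identity: for θ = a + bw ∈ {3, 1+2w} and every x ∈ R,
(2+2w)·x = (1+w)·(2·x²). -/
lemma key (a b : Z4) (hab : (a = 3 ∧ b = 0) ∨ (a = 1 ∧ b = 2)) (x : Rw a b) :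
    (2 + 2 * ww a b) * x = (1 + ww a b) * (2 * (x * x)) := by
  unfold ww
  haveI : Nontrivial Z4 := ⟨⟨0, 1, by decide⟩⟩
  obtain ⟨p, rfl⟩ := AdjoinRoot.mk_surjective x
  have hmonic := wPoly_monic a b
  have hmod : AdjoinRoot.mk (wPoly a b) p = AdjoinRoot.mk (wPoly a b) (p %ₘ wPoly a b) := by
    rw [AdjoinRoot.mk_eq_mk]
    exact ⟨p /ₘ wPoly a b, by
      nth_rewrite 1 [← Polynomial.modByMonic_add_div p (wPoly a b)]
      ring⟩
  have hdeg : (p %ₘ wPoly a b).degree ≤ 1 := by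
    have h := Polynomial.degree_modByMonic_lt p hmonic
    rw [wPoly_degree] at h
    exact Order.le_of_lt_succ (by exact_mod_cast h)
  set q := p %ₘ wPoly a b with hqdef
  have hq : q = C (q.coeff 1) * X + C (q.coeff 0) := Polynomial.eq_X_add_C_of_degree_le_one hdeg
  rw [hmod, hq, map_add, map_mul, AdjoinRoot.mk_X, AdjoinRoot.mk_C, AdjoinRoot.mk_C]
  set A := AdjoinRoot.of (wPoly a b) (q.coeff 0) with hA
  set B := AdjoinRoot.of (wPoly a b) (q.coeff 1) with hB
  set W := AdjoinRoot.root (wPoly a b) with hW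
  have hsq : ∀ t : Z4, 2 * t ^ 2 = 2 * t := by decide
  have h0 : (2 : Rw a b) * A ^ 2 = 2 * A := by
    have := congrArg (AdjoinRoot.of (wPoly a b)) (hsq (q.coeff 0))
    simpa [map_mul, map_pow, map_ofNat] using this
  have h1 : (2 : Rw a b) * B ^ 2 = 2 * B := by
    have := congrArg (AdjoinRoot.of (wPoly a b)) (hsq (q.coeff 1))
    simpa [map_mul, map_pow, map_ofNat] using this
  have h4 : (4 : Rw a b) = 0 := by
    have h40 : ((4 : Z4)) = 0 := by decide
    calc (4 : Rw a b) = AdjoinRoot.of (wPoly a b) 4 := by rw [map_ofNat]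
      _ = 0 := by rw [h40, map_zero]
  have hw := hw_rel a b
  rw [← hW] at hw
  rcases hab with ⟨rfl, rfl⟩ | ⟨rfl, rfl⟩
  · rw [map_zero, map_ofNat, zero_mul, zero_add] at hw
    linear_combination (-(1 + W)) * h0 + (-(W ^ 2 + W)) * h1 + (-2 * B ^ 2 * W) * hw
      + (-(A * B * W + A * B * W ^ 2 + B ^ 2 * W)) * h4
  · rw [map_one, map_ofNat] at hw
    linear_combination ((2 * B - 2 * B ^ 2 - 4 * A * B) - 2 * B ^ 2 * (W + 2)) * hw
      + (-(1 + W)) * h0 + (-(1 + W)) * h1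
      + (-(B ^ 2 + A * B) + W * (B - 3 * B ^ 2 - 3 * A * B)) * h4

/-- for θ = a + bw ∈ {3, 1+2w}, every self-dual linear code C ⊆ Rⁿ
contains the all-(2+2w) vector. -/
theorem self_dual_contains_all_two_plus_two_w (a b : Z4)
    (hab : (a = 3 ∧ b = 0) ∨ (a = 1 ∧ b = 2))
    (n : ℕ) (hn : 1 ≤ n) (C : Submodule (Rw a b) (Fin n → Rw a b))
    (hsd : ∀ x : Fin n → Rw a b, x ∈ C ↔ ∀ y ∈ C, ∑ i, x i * y i = 0) :
    (fun _ : Fin n => 2 + 2 * ww a b) ∈ C := by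
  rw [hsd]
  intro y hy
  have hy2 : ∑ i, y i * y i = 0 := (hsd y).mp hy y hy
  calc ∑ i, (2 + 2 * ww a b) * y i
      = ∑ i, (1 + ww a b) * (2 * (y i * y i)) :=
        Finset.sum_congr rfl fun i _ => key a b hab (y i)
    _ = (1 + ww a b) * (2 * ∑ i, y i * y i) := by simp_rw [Finset.mul_sum]
    _ = 0 := by rw [hy2]; ring
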